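/- Jordan's lemma: for any two reflections R_0, R_1 on a finite-dimensional Hilbert space H, there exists an orthogonal decomposition of H into one- and two-dimensional subspaces each invariant under both R_0 and R_1. -/

import Mathlib

open Matrix Module

lemma jordan_aux {E : Type*} [NormedAddCommGroup E] [InnerProductSpace ℂ E]
    [FiniteDimensional ℂ E] (T0 T1 : E →ₗ[ℂ] E)
    (hs0 : T0.IsSymmetric) (hs1 : T1.IsSymmetric)
    (hi0 : T0 ∘ₗ T0 = LinearMap.id) (hi1 : T1 ∘ₗ T1 = LinearMap.id) :
    ∀ (m : ℕ) (V : Submodule ℂ E), finrank ℂ V ≤ m →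
      V.map T0 ≤ V → V.map T1 ≤ V →
      ∃ (k : ℕ) (W : Fin k → Submodule ℂ E),
        (∀ i, W i ≤ V) ∧ (∀ i j, i ≠ j → W i ≤ (W j)ᗮ) ∧ (⨆ i, W i) = V ∧
        (∀ i, finrank ℂ (W i) ≤ 2) ∧ (∀ i, (W i).map T0 ≤ W i) ∧
        (∀ i, (W i).map T1 ≤ W i) := by
  intro m
  induction m with
  | zero =>
    intro V hV _ _
    have : V = ⊥ := Submodule.finrank_eq_zero.mp (Nat.le_zero.mp hV)
    refine ⟨0, Fin.elim0, ?_, ?_, ?_, ?_, ?_, ?_⟩ <;>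
      simp [this, iSup_of_empty]
  | succ m ih =>
    intro V hV hV0 hV1
    by_cases hbot : V = ⊥
    · refine ⟨0, Fin.elim0, ?_, ?_, ?_, ?_, ?_, ?_⟩ <;>
        simp [hbot, iSup_of_empty]
    -- find an eigenvector of S := T0 + T1 restricted to V
    have hSV : ∀ x ∈ V, (T0 + T1) x ∈ V := by
      intro x hx
      simp only [LinearMap.add_apply]
      exact V.add_mem (hV0 ⟨x, hx, rfl⟩) (hV1 ⟨x, hx, rfl⟩)
    have : Nontrivial V := Submodule.nontrivial_iff_ne_bot.mpr hbot
    obtain ⟨μ, hμ⟩ := Module.End.exists_eigenvalue ((T0 + T1).restrict hSV)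
    obtain ⟨v', hv'⟩ := hμ.exists_hasEigenvector
    set v : E := (v' : E) with hvdef
    have hvV : v ∈ V := v'.2
    have hvne : v ≠ 0 := fun h => hv'.2 (Subtype.ext h)
    have hSv : T0 v + T1 v = μ • v := by
      have := hv'.apply_eq_smul
      have h2 := congrArg (Subtype.val) this
      simpa [LinearMap.restrict_apply] using h2
    set W : Submodule ℂ E := Submodule.span ℂ {v, T0 v} with hWdef
    have hvW : v ∈ W := Submodule.subset_span (by simp)
    have hT0vW : T0 v ∈ W := Submodule.subset_span (by simp)
    have hT0T0 : T0 (T0 v) = v := by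
      have := congrArg (fun f => f v) hi0; simpa using this
    have hT1T1 : ∀ x : E, T1 (T1 x) = x := by
      intro x; have := congrArg (fun f => f x) hi1; simpa using this
    have hT1v : T1 v = μ • v - T0 v := by rw [← hSv]; abel
    have hT1vW : T1 v ∈ W := by
      rw [hT1v]; exact W.sub_mem (W.smul_mem _ hvW) hT0vW
    have hT1T0v : T1 (T0 v) ∈ W := by
      have h : T0 v = μ • v - T1 v := by rw [← hSv]; abel
      have : T1 (T0 v) = μ • T1 v - v := by
        rw [h, map_sub, _root_.map_smul, hT1T1]
      rw [this]
      exact W.sub_mem (W.smul_mem _ hT1vW) hvW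
    have hWV : W ≤ V := by
      rw [hWdef, Submodule.span_le]
      intro x hx
      rcases hx with h | h
      · simpa [h] using hvV
      · simp only [Set.mem_singleton_iff] at h
        subst h; exact hV0 ⟨v, hvV, rfl⟩
    have hW0 : W.map T0 ≤ W := by
      rw [hWdef, Submodule.map_span, Submodule.span_le]
      rintro x ⟨y, hy, rfl⟩
      rcases hy with h | h
      · subst h; exact hT0vW
      · simp only [Set.mem_singleton_iff] at h; subst h
        rw [hT0T0]; exact hvW
    have hW1 : W.map T1 ≤ W := by
      rw [hWdef, Submodule.map_span, Submodule.span_le]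
      rintro x ⟨y, hy, rfl⟩
      rcases hy with h | h
      · subst h; exact hT1vW
      · simp only [Set.mem_singleton_iff] at h; subst h; exact hT1T0v
    have hWrank : finrank ℂ W ≤ 2 := by
      classical
      calc finrank ℂ W ≤ ({v, T0 v} : Set E).toFinset.card :=
            finrank_span_le_card _
        _ ≤ 2 := by
            rw [Set.toFinset_insert, Set.toFinset_singleton]
            exact Finset.card_insert_le _ _ |>.trans (by simp)
    set V' : Submodule ℂ E := Wᗮ ⊓ V with hV'def
    have hV'0 : V'.map T0 ≤ V' := by
      rintro x ⟨y, hy, rfl⟩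
      obtain ⟨hyo, hyV⟩ := Submodule.mem_inf.mp hy
      refine Submodule.mem_inf.mpr ⟨?_, hV0 ⟨y, hyV, rfl⟩⟩
      rw [Submodule.mem_orthogonal]
      intro w hw
      rw [← hs0 w y]
      exact hyo _ (hW0 ⟨w, hw, rfl⟩)
    have hV'1 : V'.map T1 ≤ V' := by
      rintro x ⟨y, hy, rfl⟩
      obtain ⟨hyo, hyV⟩ := Submodule.mem_inf.mp hy
      refine Submodule.mem_inf.mpr ⟨?_, hV1 ⟨y, hyV, rfl⟩⟩
      rw [Submodule.mem_orthogonal]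
      intro w hw
      rw [← hs1 w y]
      exact hyo _ (hW1 ⟨w, hw, rfl⟩)
    have hsup : W ⊔ V' = V := by
      rw [hV'def]; exact Submodule.sup_orthogonal_inf_of_hasOrthogonalProjection hWV
    have hinf : W ⊓ V' = ⊥ := by
      rw [hV'def, ← inf_assoc]
      simp [Submodule.inf_orthogonal_eq_bot]
    have hWpos : 1 ≤ finrank ℂ W := by
      have : Nontrivial W := Submodule.nontrivial_iff_ne_bot.mpr
        (fun h => hvne (by simpa [h] using hvW))
      exact finrank_pos
    have hrank : finrank ℂ V' ≤ m := by
      have h := Submodule.finrank_sup_add_finrank_inf_eq W V'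
      rw [hsup, hinf] at h
      simp only [finrank_bot, add_zero] at h
      omega
    obtain ⟨k, W', hle', hortho', hsup', hrank', h0', h1'⟩ := ih V' hrank hV'0 hV'1
    refine ⟨k + 1, Fin.cons W W', ?_, ?_, ?_, ?_, ?_, ?_⟩
    · intro i
      refine Fin.cases ?_ ?_ i
      · exact hWV
      · intro j; exact (hle' j).trans (inf_le_right.trans le_rfl)
    · have hW'W : ∀ j, W' j ≤ Wᗮ := fun j => (hle' j).trans inf_le_left
      have hWW' : ∀ j, W ≤ (W' j)ᗮ := fun j =>
        (Submodule.le_orthogonal_orthogonal W).trans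
          (Submodule.orthogonal_le (hW'W j))
      intro i j hij
      induction i using Fin.cases with
      | zero =>
        induction j using Fin.cases with
        | zero => exact absurd rfl hij
        | succ j' => simpa [Fin.cons_zero, Fin.cons_succ] using hWW' j'
      | succ i' =>
        induction j using Fin.cases with
        | zero => simpa [Fin.cons_zero, Fin.cons_succ] using hW'W i'
        | succ j' =>
          have hne : i' ≠ j' := fun h => hij (by rw [h])
          simpa [Fin.cons_succ] using hortho' i' j' hne
    · have : (⨆ i, Fin.cons W W' i) = W ⊔ ⨆ i, W' i := by
        apply le_antisymm
        · apply iSup_le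
          intro i
          refine Fin.cases ?_ ?_ i
          · exact le_sup_left
          · intro j; exact le_sup_of_le_right (le_iSup _ j)
        · apply sup_le
          · exact le_iSup (Fin.cons W W' : Fin (k+1) → _) 0
          · exact iSup_le fun j => le_iSup (Fin.cons W W' : Fin (k+1) → _) j.succ
      rw [this, hsup', hsup]
    · intro i; refine Fin.cases ?_ ?_ i
      · exact hWrank
      · exact hrank'
    · intro i; refine Fin.cases ?_ ?_ i
      · exact hW0
      · exact h0'
    · intro i; refine Fin.cases ?_ ?_ i
      · exact hW1
      · exact h1'

theorem jordan_lemma {n : ℕ} (R0 R1 : Matrix (Fin n) (Fin n) ℂ)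
    (h0h : R0.IsHermitian) (h1h : R1.IsHermitian)
    (h0 : R0 * R0 = 1) (h1 : R1 * R1 = 1) :
    ∃ (k : ℕ) (W : Fin k → Submodule ℂ (EuclideanSpace ℂ (Fin n))),
      (∀ i j, i ≠ j → W i ≤ (W j)ᗮ) ∧
      (⨆ i, W i) = ⊤ ∧
      (∀ i, Module.finrank ℂ ↥(W i) ≤ 2) ∧
      (∀ i, (W i).map (Matrix.toEuclideanLin R0) ≤ W i) ∧
      (∀ i, (W i).map (Matrix.toEuclideanLin R1) ≤ W i) := by
  have key : ∀ (A B : Matrix (Fin n) (Fin n) ℂ),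
      toEuclideanLin A ∘ₗ toEuclideanLin B = toEuclideanLin (A * B) := by
    intro A B
    apply LinearMap.ext
    intro x
    simp [toEuclideanLin_apply, mulVec_mulVec]
  have hone : (toEuclideanLin (1 : Matrix (Fin n) (Fin n) ℂ)) = LinearMap.id := by
    apply LinearMap.ext; intro x
    apply (WithLp.equiv 2 _).injective
    simp [toEuclideanLin_apply]
  have hi0 : toEuclideanLin R0 ∘ₗ toEuclideanLin R0 = LinearMap.id := by
    rw [key, h0, hone]
  have hi1 : toEuclideanLin R1 ∘ₗ toEuclideanLin R1 = LinearMap.id := by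
    rw [key, h1, hone]
  obtain ⟨k, W, _, hortho, hsup, hrank, hm0, hm1⟩ :=
    jordan_aux (toEuclideanLin R0) (toEuclideanLin R1)
      (isHermitian_iff_isSymmetric.mp h0h) (isHermitian_iff_isSymmetric.mp h1h)
      hi0 hi1 (finrank ℂ (⊤ : Submodule ℂ (EuclideanSpace ℂ (Fin n)))) ⊤
      le_rfl le_top le_top
  exact ⟨k, W, hortho, hsup, hrank, hm0, hm1⟩
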